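/- Let T be a positive trace-preserving linear map on M_n, A = I − T, and A^# the group inverse of A (which exists). Then the Cesàro means (1/N)(I + T + T² + ⋯ + T^{N−1}) converge, as N → ∞, to the linear map I − A^#A. -/

import Mathlib

open Matrix
open scoped ComplexOrder

noncomputable section

/-- The algebra of `n × n` complex matrices. -/
abbrev Mn (n : ℕ) : Type := Matrix (Fin n) (Fin n) ℂ

/-- The map `X ↦ Q X Q`. -/
def sandwich {n : ℕ} (Q : Mn n) : Module.End ℂ (Mn n) :=
  (LinearMap.mulLeft ℂ Q).comp (LinearMap.mulRight ℂ Q)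

/-- The sum of the two components of a pair. -/
def sumPair (n : ℕ) : (Mn n × Mn n) →ₗ[ℂ] Mn n :=
  LinearMap.fst ℂ (Mn n) (Mn n) + LinearMap.snd ℂ (Mn n) (Mn n)

/-- The QMC `Λ_{T,V}` induced by the channel `T` and the subspace `V` (with orthogonal
projection `P` onto `V` and `Q = I − P`):
`Λ(X₁,X₂) = ((I−ℚ)(T(X₁+X₂)), ℚ(T(X₁+X₂)))` where `ℚ(Y) = QYQ`. -/
def Lam {n : ℕ} (T : Module.End ℂ (Mn n)) (Q : Mn n) : Module.End ℂ (Mn n × Mn n) :=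
  LinearMap.prod
    (((1 : Module.End ℂ (Mn n)) - sandwich Q) ∘ₗ (T ∘ₗ sumPair n))
    ((sandwich Q) ∘ₗ (T ∘ₗ sumPair n))

/-- `ℙ₁(X₁,X₂) = (X₁,0)`. -/
def proj1 (n : ℕ) : Module.End ℂ (Mn n × Mn n) :=
  (LinearMap.inl ℂ (Mn n) (Mn n)).comp (LinearMap.fst ℂ (Mn n) (Mn n))

/-- `ℙ₂(X₁,X₂) = (0,X₂)`. -/
def proj2 (n : ℕ) : Module.End ℂ (Mn n × Mn n) :=
  (LinearMap.inr ℂ (Mn n) (Mn n)).comp (LinearMap.snd ℂ (Mn n) (Mn n))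

/-- The block-diagonal part `S_d = diag(S₁₁,S₂₂)` of a map on `M_n ⊕ M_n`. -/
def diagPart {n : ℕ} (S : Module.End ℂ (Mn n × Mn n)) : Module.End ℂ (Mn n × Mn n) :=
  proj1 n * S * proj1 n + proj2 n * S * proj2 n

/-- The map `E(X₁,X₂) = (X₁+X₂, X₁+X₂)`. -/
def Emap (n : ℕ) : Module.End ℂ (Mn n × Mn n) :=
  LinearMap.prod (sumPair n) (sumPair n)

/-- The map `Θ_W(X₁,X₂) = Tr(X₁+X₂)·W`. -/
def Theta {n : ℕ} (W : Mn n × Mn n) : Module.End ℂ (Mn n × Mn n) :=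
  ((Matrix.traceLinearMap (Fin n) ℂ ℂ) ∘ₗ sumPair n).smulRight W

/-- The mean hitting time `τ(ρ → V) = Σ_{r ≥ 1} r·Tr(ℙT(ℚT)^{r−1} ρ)`. -/
def tau {n : ℕ} (T : Module.End ℂ (Mn n)) (P Q : Mn n) (ρ : Mn n) : ℂ :=
  ∑' r : ℕ, ((r : ℂ) + 1) * ((sandwich P * T * (sandwich Q * T) ^ r) ρ).trace

/-- The pure state `ρ_φ = |φ⟩⟨φ|`. -/
def rhoOf {n : ℕ} (φ : Fin n → ℂ) : Mn n := Matrix.vecMulVec φ (star φ)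

/-- A positive map on `M_n`. -/
def IsPosMap {n : ℕ} (T : Module.End ℂ (Mn n)) : Prop :=
  ∀ X : Mn n, X.PosSemidef → (T X).PosSemidef

/-- A trace-preserving map on `M_n`. -/
def IsTracePreserving {n : ℕ} (T : Module.End ℂ (Mn n)) : Prop :=
  ∀ X : Mn n, (T X).trace = X.trace

/-- A quantum channel: a completely positive trace-preserving map, given by a Kraus
decomposition `T(X) = Σᵢ Vᵢ X Vᵢ*` with `Σᵢ Vᵢ* Vᵢ = I`. -/
def IsChannel {n : ℕ} (T : Module.End ℂ (Mn n)) : Prop :=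
  ∃ (k : ℕ) (V : Fin k → Mn n),
    (∀ X : Mn n, T X = ∑ i, V i * X * (V i)ᴴ) ∧ (∑ i, (V i)ᴴ * V i = 1)

/-- Irreducibility of a positive map on `M_n`: the only orthogonal projections `P` with
`T(P M_n P) ⊆ P M_n P` are `P = 0` and `P = I`. -/
def IsIrreducibleMap {n : ℕ} (T : Module.End ℂ (Mn n)) : Prop :=
  ∀ P : Mn n, P.IsHermitian → P * P = P →
    (∀ X : Mn n, ∃ Y : Mn n, T (P * X * P) = P * Y * P) → P = 0 ∨ P = 1


attribute [local instance] Matrix.normedAddCommGroup Matrix.normedSpace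

namespace Stmt8Aux

variable {n : ℕ}

lemma diag_nonneg {M : Mn n} (hM : M.PosSemidef) (i : Fin n) : 0 ≤ M i i := by
  have h := hM.dotProduct_mulVec_nonneg (Pi.single i 1)
  simpa [dotProduct, mulVec_single, Pi.single_apply, apply_ite, Finset.sum_ite_eq] using h

lemma quad {M : Mn n} (hM : M.PosSemidef) (i j : Fin n) :
    0 ≤ ((‖M i j‖:ℂ)^2 * M i i + (‖M i j‖:ℂ)^2 * M j j - 2 * (‖M i j‖:ℂ)^3).re := by
  set a := M i j with ha
  set r : ℝ := ‖a‖ with hr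
  set x : Fin n → ℂ := Pi.single i (r : ℂ) + Pi.single j (-(starRingEnd ℂ) a) with hx
  have h := hM.dotProduct_mulVec_nonneg x
  have hji : M j i = (starRingEnd ℂ) a := by
    have := congrFun (congrFun hM.1 j) i
    simpa [Matrix.conjTranspose_apply] using this.symm
  have haa : a * (starRingEnd ℂ) a = ((r:ℂ))^2 := by
    rw [Complex.mul_conj, Complex.normSq_eq_norm_sq, hr]
    push_cast; ring
  have hval : dotProduct (star x) (M *ᵥ x) =
      (r:ℂ)^2 * M i i + (r:ℂ)^2 * M j j - 2 * (r:ℂ)^3 := by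
    have hsx : star x = Pi.single i ((r:ℂ)) + Pi.single j (-a) := by
      rw [hx, star_add, ← Pi.single_star, ← Pi.single_star]
      simp [Complex.star_def, Complex.conj_ofReal]
    rw [hsx, hx]
    simp only [mulVec_add, mulVec_single, dotProduct_add, add_dotProduct,
      single_dotProduct, Pi.add_apply, Pi.smul_apply, MulOpposite.smul_eq_mul_unop,
      MulOpposite.unop_op, Matrix.col_apply, hji]
    linear_combination (M j j - 2 * (r:ℂ)) * haa
  rw [← hval]
  exact (Complex.le_def.mp h).1

lemma diag_re_nonneg {M : Mn n} (hM : M.PosSemidef) (i : Fin n) : 0 ≤ (M i i).re :=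
  (Complex.le_def.mp (diag_nonneg hM i)).1

lemma trace_re_nonneg {M : Mn n} (hM : M.PosSemidef) : 0 ≤ M.trace.re := by
  rw [Matrix.trace, Complex.re_sum]
  exact Finset.sum_nonneg fun i _ => diag_re_nonneg hM i

lemma diag_re_le_trace {M : Mn n} (hM : M.PosSemidef) (i : Fin n) :
    (M i i).re ≤ M.trace.re := by
  rw [Matrix.trace, Complex.re_sum]
  exact Finset.single_le_sum (fun j _ => diag_re_nonneg hM j) (Finset.mem_univ i)

lemma entry_le_trace {M : Mn n} (hM : M.PosSemidef) (i j : Fin n) :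
    ‖M i j‖ ≤ M.trace.re := by
  rcases eq_or_lt_of_le (norm_nonneg (M i j)) with h0 | h0
  · rw [← h0]; exact trace_re_nonneg hM
  · have h := quad hM i j
    set r : ℝ := ‖M i j‖
    have hre : ((r:ℂ)^2 * M i i + (r:ℂ)^2 * M j j - 2 * (r:ℂ)^3).re
        = r^2 * (M i i).re + r^2 * (M j j).re - 2 * r^3 := by
      simp only [Complex.sub_re, Complex.add_re, Complex.mul_re, ← Complex.ofReal_pow,
        Complex.ofReal_re, Complex.ofReal_im, Complex.re_ofNat, Complex.im_ofNat]
      ring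
    rw [hre] at h
    have h1 := diag_re_le_trace hM i
    have h2 := diag_re_le_trace hM j
    by_contra hlt
    push_neg at hlt
    have hr2 : (0:ℝ) < r^2 := by positivity
    have e1 : r^2 * (M i i).re ≤ r^2 * (trace M).re := by nlinarith
    have e2 : r^2 * (M j j).re ≤ r^2 * (trace M).re := by nlinarith
    have e3 : r^2 * (trace M).re < r^2 * r := by nlinarith
    nlinarith

lemma psd_norm_le_trace {M : Mn n} (hM : M.PosSemidef) : ‖M‖ ≤ M.trace.re := by
  rw [Matrix.norm_le_iff (trace_re_nonneg hM)]
  exact entry_le_trace hM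

lemma herm_decomp {H : Mn n} (hH : H.IsHermitian) :
    ∃ P Q : Mn n, P.PosSemidef ∧ Q.PosSemidef ∧ H = P - Q := by
  set U : Mn n := (hH.eigenvectorUnitary : Mn n) with hU
  refine ⟨U * diagonal (fun i => ((max (hH.eigenvalues i) 0 : ℝ) : ℂ)) * Uᴴ,
         U * diagonal (fun i => ((max (-hH.eigenvalues i) 0 : ℝ) : ℂ)) * Uᴴ, ?_, ?_, ?_⟩
  · exact (Matrix.posSemidef_diagonal_iff.mpr (fun i =>
      Complex.zero_le_real.mpr (le_max_right _ _))).mul_mul_conjTranspose_same U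
  · exact (Matrix.posSemidef_diagonal_iff.mpr (fun i =>
      Complex.zero_le_real.mpr (le_max_right _ _))).mul_mul_conjTranspose_same U
  · have hsub : (diagonal (fun i => ((max (hH.eigenvalues i) 0 : ℝ) : ℂ)))
        - (diagonal (fun i => ((max (-hH.eigenvalues i) 0 : ℝ) : ℂ)))
        = diagonal (Complex.ofReal ∘ hH.eigenvalues) := by
      rw [Matrix.diagonal_sub]
      refine congrArg diagonal (funext fun i => ?_)
      have h := max_zero_sub_max_neg_zero_eq_self (hH.eigenvalues i)
      show ((max (hH.eigenvalues i) 0 : ℝ) : ℂ) - ((max (-hH.eigenvalues i) 0 : ℝ) : ℂ)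
        = ((hH.eigenvalues i : ℝ) : ℂ)
      rw [← Complex.ofReal_sub, h]
    calc H = U * diagonal (Complex.ofReal ∘ hH.eigenvalues) * Uᴴ := by
            rw [hU]; exact hH.spectral_theorem
      _ = _ := by rw [← hsub]; noncomm_ring

lemma matrix_decomp (Y : Mn n) :
    ∃ P₁ P₂ P₃ P₄ : Mn n, P₁.PosSemidef ∧ P₂.PosSemidef ∧ P₃.PosSemidef ∧ P₄.PosSemidef ∧
      Y = (P₁ - P₂) + Complex.I • (P₃ - P₄) := by
  have hH : ((2⁻¹ : ℂ) • (Y + Yᴴ)).IsHermitian := by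
    unfold Matrix.IsHermitian
    rw [conjTranspose_smul, conjTranspose_add, conjTranspose_conjTranspose]
    simp [add_comm]
  have hK : ((-(2⁻¹ : ℂ) * Complex.I) • (Y - Yᴴ)).IsHermitian := by
    unfold Matrix.IsHermitian
    rw [conjTranspose_smul, conjTranspose_sub, conjTranspose_conjTranspose]
    rw [show star (-(2⁻¹ : ℂ) * Complex.I) = (2⁻¹ : ℂ) * Complex.I by
      simp [Complex.star_def, Complex.conj_I]]
    rw [show (Yᴴ - Y) = (-1 : ℂ) • (Y - Yᴴ) by simp]
    rw [smul_smul]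
    ring_nf
  obtain ⟨P₁, P₂, h1, h2, hHd⟩ := herm_decomp hH
  obtain ⟨P₃, P₄, h3, h4, hKd⟩ := herm_decomp hK
  refine ⟨P₁, P₂, P₃, P₄, h1, h2, h3, h4, ?_⟩
  rw [← hHd, ← hKd, smul_smul]
  rw [show Complex.I * (-(2⁻¹ : ℂ) * Complex.I) = (2⁻¹ : ℂ) by
    rw [mul_comm, mul_assoc, Complex.I_mul_I]; ring]
  module

lemma pow_posMap {T : Module.End ℂ (Mn n)} (hT : IsPosMap T) (N : ℕ) :
    IsPosMap (T ^ N) := by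
  induction N with
  | zero => intro X hX; simpa using hX
  | succ N ih =>
    intro X hX
    rw [pow_succ, Module.End.mul_apply]
    exact ih _ (hT _ hX)

lemma pow_trPres {T : Module.End ℂ (Mn n)} (hT : IsTracePreserving T) (N : ℕ) :
    IsTracePreserving (T ^ N) := by
  induction N with
  | zero => intro X; simp
  | succ N ih =>
    intro X
    rw [pow_succ, Module.End.mul_apply, ih, hT]

lemma iterate_bound {T : Module.End ℂ (Mn n)} (hTpos : IsPosMap T)
    (hTtr : IsTracePreserving T) (Y : Mn n) :
    ∃ C : ℝ, ∀ N : ℕ, ‖(T ^ N) Y‖ ≤ C := by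
  obtain ⟨P₁, P₂, P₃, P₄, h1, h2, h3, h4, hY⟩ := matrix_decomp Y
  refine ⟨P₁.trace.re + P₂.trace.re + P₃.trace.re + P₄.trace.re, fun N => ?_⟩
  have hb : ∀ (P : Mn n), P.PosSemidef → ‖(T ^ N) P‖ ≤ P.trace.re := fun P hP => by
    have := psd_norm_le_trace (pow_posMap hTpos N P hP)
    rwa [pow_trPres hTtr N P] at this
  calc ‖(T ^ N) Y‖ = ‖((T ^ N) P₁ - (T ^ N) P₂) + Complex.I • ((T ^ N) P₃ - (T ^ N) P₄)‖ := by
        rw [hY]; rw [map_add, map_sub, _root_.map_smul, map_sub]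
    _ ≤ ‖(T ^ N) P₁ - (T ^ N) P₂‖ + ‖Complex.I • ((T ^ N) P₃ - (T ^ N) P₄)‖ := norm_add_le _ _
    _ ≤ (‖(T ^ N) P₁‖ + ‖(T ^ N) P₂‖) + (‖(T ^ N) P₃‖ + ‖(T ^ N) P₄‖) := by
        rw [norm_smul, Complex.norm_I, one_mul]
        exact add_le_add (norm_sub_le _ _) (norm_sub_le _ _)
    _ ≤ _ := by
        have := hb P₁ h1; have := hb P₂ h2; have := hb P₃ h3; have := hb P₄ h4
        linarith


end Stmt8Aux

/-- The Cesàro means `(1/N)(I + T + ⋯ + T^{N−1})` of a positive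
trace-preserving map `T` converge to `I − A^#A`, where `A = I − T` and `A^#` is its
group inverse. (Convergence of maps on the finite-dimensional space `M_n` is stated
pointwise, which is equivalent to convergence in any norm.) -/
theorem stmt8 {n : ℕ} (T : Module.End ℂ (Mn n))
    (hTpos : IsPosMap T) (hTtr : IsTracePreserving T)
    (A B : Module.End ℂ (Mn n)) (hA : A = 1 - T)
    (hB1 : A * B * A = A) (hB2 : B * A * B = B) (hB3 : A * B = B * A) :
    ∀ X : Mn n, Filter.Tendsto
      (fun N : ℕ => (N : ℂ)⁻¹ • ((∑ k ∈ Finset.range N, T ^ k) X))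
      Filter.atTop (nhds (((1 : Module.End ℂ (Mn n)) - B * A) X)) := by

  intro X
  have hTA : T = 1 - A := by rw [hA, sub_sub_cancel]
  have hAP : A * (1 - B * A) = 0 := by
    rw [mul_sub, mul_one, ← mul_assoc, hB1, sub_self]
  have hTP : T * (1 - B * A) = 1 - B * A := by
    rw [hTA, sub_mul, one_mul, hAP, sub_zero]
  have hTkP : ∀ k : ℕ, T ^ k * (1 - B * A) = 1 - B * A := by
    intro k
    induction k with
    | zero => rw [pow_zero, one_mul]
    | succ k ih => rw [pow_succ, mul_assoc, hTP, ih]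
  have hsum : ∀ N : ℕ, (∑ k ∈ Finset.range N, T ^ k) * A = 1 - T ^ N := by
    intro N
    rw [hA]
    exact geom_sum_mul_neg T N
  set Y : Mn n := B X with hY
  set PX : Mn n := ((1 : Module.End ℂ (Mn n)) - B * A) X with hPX
  have key : ∀ N : ℕ, (∑ k ∈ Finset.range N, T ^ k) X = N • PX + (Y - (T ^ N) Y) := by
    intro N
    have hX : X = PX + A Y := by
      have h1 : (B * A) X = A Y := by
        rw [← hB3]; rfl
      rw [hPX]
      simp [LinearMap.sub_apply, h1]
    have h1 : (∑ k ∈ Finset.range N, T ^ k) PX = N • PX := by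
      have : ∀ k ∈ Finset.range N, (T ^ k) PX = PX := by
        intro k _
        have h := congrArg (fun S : Module.End ℂ (Mn n) => S X) (hTkP k)
        simp only [Module.End.mul_apply] at h
        rw [hPX]
        exact h
      rw [LinearMap.sum_apply, Finset.sum_congr rfl this, Finset.sum_const,
        Finset.card_range]
    have h2 : (∑ k ∈ Finset.range N, T ^ k) (A Y) = Y - (T ^ N) Y := by
      have h := congrArg (fun S : Module.End ℂ (Mn n) => S Y) (hsum N)
      simp only [Module.End.mul_apply, LinearMap.sub_apply, Module.End.one_apply] at h
      exact h
    conv_lhs => rw [hX]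
    rw [map_add, h1, h2]
  obtain ⟨C, hC⟩ := Stmt8Aux.iterate_bound hTpos hTtr Y
  have hlim0 : Filter.Tendsto (fun N : ℕ => (N : ℂ)⁻¹ • (Y - (T ^ N) Y))
      Filter.atTop (nhds 0) := by
    apply squeeze_zero_norm (a := fun N : ℕ => (‖Y‖ + C) / N)
    · intro N
      rw [norm_smul]
      have h1 : ‖((N : ℂ))⁻¹‖ = (N : ℝ)⁻¹ := by
        rw [norm_inv, Complex.norm_natCast]
      rw [h1, div_eq_inv_mul]
      apply mul_le_mul_of_nonneg_left _ (by positivity)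
      calc ‖Y - (T ^ N) Y‖ ≤ ‖Y‖ + ‖(T ^ N) Y‖ := norm_sub_le _ _
        _ ≤ ‖Y‖ + C := by have := hC N; linarith
    · exact tendsto_const_div_atTop_nhds_zero_nat _
  have hmain : Filter.Tendsto (fun N : ℕ => PX + (N : ℂ)⁻¹ • (Y - (T ^ N) Y))
      Filter.atTop (nhds PX) := by
    simpa using tendsto_const_nhds.add hlim0
  apply hmain.congr'
  filter_upwards [Filter.eventually_ge_atTop 1] with N hN
  rw [key N, smul_add]
  congr 1
  have hN0 : ((N : ℂ)) ≠ 0 := by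
    exact_mod_cast Nat.cast_ne_zero.mpr (by omega)
  rw [← Nat.cast_smul_eq_nsmul ℂ, smul_smul, inv_mul_cancel₀ hN0, one_smul]
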